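/- A GT-pattern x ∈ GT(λ,μ) with tiling 𝒫 is a vertex of GT(λ,μ) if and only if the tiling matrix A_𝒫 has trivial kernel, equivalently some s × s submatrix of A_𝒫 (where s is the number of free tiles) has nonzero determinant. -/

import Mathlib

open scoped Classical

/-- Valid index positions of a triangular array of size `n`. -/
abbrev IdxP (n i j : ℕ) : Prop := 1 ≤ i ∧ i ≤ j ∧ j ≤ n

/-- A Gelfand--Tsetlin pattern of size `n` (entries outside the triangle are ignored). -/
def IsGTPattern (n : ℕ) (x : ℕ → ℕ → ℝ) : Prop :=
  (∀ i j, IdxP n i j → 0 ≤ x i j) ∧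
  (∀ i j, 1 ≤ i → i ≤ j → j + 1 ≤ n → x i (j + 1) ≥ x i j ∧ x i j ≥ x (i + 1) (j + 1))

/-- Membership in the Gelfand--Tsetlin polytope `GT(λ,μ)`: a GT-pattern, vanishing outside the
triangle, with top row `λ` and `j`-th row sum `μ₁ + ⋯ + μⱼ`. -/
def GTMem (n : ℕ) (lam mu : ℕ → ℤ) (x : ℕ → ℕ → ℝ) : Prop :=
  IsGTPattern n x ∧
  (∀ i j, ¬ IdxP n i j → x i j = 0) ∧
  (∀ i, 1 ≤ i → i ≤ n → x i n = (lam i : ℝ)) ∧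
  (∀ j, 1 ≤ j → j ≤ n → ∑ i ∈ Finset.Icc 1 j, x i j = ∑ t ∈ Finset.Icc 1 j, (mu t : ℝ))

/-- Adjacency of positions in the triangular arrangement: offsets `(±1,±1)` and `(0,±1)`. -/
def Adj (p q : ℕ × ℕ) : Prop :=
  (q.1 = p.1 + 1 ∧ q.2 = p.2 + 1) ∨ (q.1 = p.1 ∧ q.2 = p.2 + 1) ∨
  (p.1 = q.1 + 1 ∧ p.2 = q.2 + 1) ∨ (p.1 = q.1 ∧ p.2 = q.2 + 1)

/-- One step of the tile relation: adjacent valid positions carrying equal entries. -/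
def Step (n : ℕ) (x : ℕ → ℕ → ℝ) (p q : ℕ × ℕ) : Prop :=
  IdxP n p.1 p.2 ∧ IdxP n q.1 q.2 ∧ Adj p q ∧ x p.1 p.2 = x q.1 q.2

/-- Two positions lie in the same tile of the tiling of `x`. -/
def SameTile (n : ℕ) (x : ℕ → ℕ → ℝ) (p q : ℕ × ℕ) : Prop :=
  Relation.ReflTransGen (Step n x) p q

/-- A tile of the tiling of `x`. -/
def IsTile (n : ℕ) (x : ℕ → ℕ → ℝ) (T : Set (ℕ × ℕ)) : Prop :=
  ∃ p : ℕ × ℕ, IdxP n p.1 p.2 ∧ T = {q | SameTile n x p q}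

/-- A free tile: a tile meeting neither the bottom entry `(1,1)` nor the top row `(i,n)`. -/
def IsFreeTile (n : ℕ) (x : ℕ → ℕ → ℝ) (T : Set (ℕ × ℕ)) : Prop :=
  IsTile n x T ∧ ((1, 1) : ℕ × ℕ) ∉ T ∧ ∀ i, ((i, n) : ℕ × ℕ) ∉ T

/-- The tiling matrix over `ℝ`: rows indexed by `j = 2, …, n-1` (here `j = j₀ + 2`), columns by
the free tiles `P 1, …, P s`; the `(j,k)` entry is `#{i : (i,j) ∈ P k}`. -/
noncomputable def tileMat (n s : ℕ) (P : Fin s → Set (ℕ × ℕ)) :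
    Matrix (Fin (n - 2)) (Fin s) ℝ :=
  fun j k => ({i : ℕ | (i, j.1 + 2) ∈ P k}.ncard : ℝ)

section Aux

variable {n : ℕ} {x : ℕ → ℕ → ℝ}

lemma adj_symm : Symmetric Adj := by
  intro p q h; unfold Adj at *; tauto

lemma step_symm : Symmetric (Step n x) := by
  intro p q h; exact ⟨h.2.1, h.1, adj_symm h.2.2.1, h.2.2.2.symm⟩

lemma sameTile_symm : Symmetric (SameTile n x) :=
  by haveI : Std.Symm (Step n x) := ⟨fun a b h => step_symm h⟩; exact fun a b h => Std.Symm.symm (r := Relation.ReflTransGen (Step n x)) a b h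

lemma sameTile_trans {p q r} (h1 : SameTile n x p q) (h2 : SameTile n x q r) :
    SameTile n x p r := Relation.ReflTransGen.trans h1 h2

lemma sameTile_valid {p q} (hp : IdxP n p.1 p.2) (h : SameTile n x p q) : IdxP n q.1 q.2 := by
  induction h with
  | refl => exact hp
  | tail _ h2 _ => exact h2.2.1

lemma sameTile_val {p q} (h : SameTile n x p q) : x p.1 p.2 = x q.1 q.2 := by
  induction h with
  | refl => rfl
  | tail _ h2 ih => exact ih.trans h2.2.2.2

lemma tile_eq {T T' : Set (ℕ × ℕ)} {q} (hT : IsTile n x T) (hT' : IsTile n x T')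
    (hq : q ∈ T) (hq' : q ∈ T') : T = T' := by
  obtain ⟨p, hp, rfl⟩ := hT
  obtain ⟨p', hp', rfl⟩ := hT'
  have h1 : SameTile n x p q := hq
  have h2 : SameTile n x p' q := hq'
  ext r
  simp only [Set.mem_setOf_eq]
  constructor
  · intro hr
    exact sameTile_trans h2 (sameTile_trans (sameTile_symm h1) hr)
  · intro hr
    exact sameTile_trans h1 (sameTile_trans (sameTile_symm h2) hr)

lemma tile_closed {T : Set (ℕ × ℕ)} {p q} (hT : IsTile n x T) (hp : p ∈ T)
    (h : SameTile n x p q) : q ∈ T := by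
  obtain ⟨r, hr, rfl⟩ := hT
  exact sameTile_trans hp h

lemma zero_chain (hgt : IsGTPattern n x) :
    ∀ d i j, IdxP n i j → j + d = n → x i j = 0 → SameTile n x (i, j) (i + d, n) := by
  intro d
  induction d with
  | zero =>
    intro i j hij hjn h0
    have hj : j = n := by omega
    subst hj
    exact Relation.ReflTransGen.refl
  | succ d ih =>
    intro i j hij hjn h0
    have hj1 : j + 1 ≤ n := by omega
    have hle := (hgt.2 i j hij.1 hij.2.1 hj1).2
    have hge := hgt.1 (i + 1) (j + 1) ⟨by omega, by omega, hj1⟩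
    have h0' : x (i + 1) (j + 1) = 0 := le_antisymm (by rw [← h0]; exact hle) hge
    have hstep : Step n x (i, j) (i + 1, j + 1) :=
      ⟨hij, ⟨by omega, by omega, hj1⟩, Or.inl ⟨rfl, rfl⟩, by rw [h0, h0']⟩
    have htl := ih (i + 1) (j + 1) ⟨by omega, by omega, hj1⟩ (by omega) h0'
    have heq : i + (d + 1) = i + 1 + d := by omega
    rw [heq]
    exact Relation.ReflTransGen.head hstep htl

lemma free_tile_pos (hgt : IsGTPattern n x) {T : Set (ℕ × ℕ)} (hT : IsFreeTile n x T)
    {i j : ℕ} (hmem : (i, j) ∈ T) : 0 < x i j := by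
  obtain ⟨⟨p, hp, rfl⟩, h11, htop⟩ := hT
  have hij : IdxP n i j := sameTile_valid hp hmem
  rcases (hgt.1 i j hij).lt_or_eq with h | h
  · exact h
  · exfalso
    have hchain := zero_chain hgt (n - j) i j hij (by omega) h.symm
    exact htop (i + (n - j)) (tile_closed ⟨p, hp, rfl⟩ hmem hchain)

end Aux

section Tiles

variable {n s : ℕ} {x : ℕ → ℕ → ℝ} {P : Fin s → Set (ℕ × ℕ)}

lemma tile_mem_unique (hPfree : ∀ k, IsFreeTile n x (P k)) (hPinj : Function.Injective P)
    {k k' : Fin s} {q} (h : q ∈ P k) (h' : q ∈ P k') : k = k' :=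
  hPinj (tile_eq (hPfree k).1 (hPfree k').1 h h')

lemma mem_valid (hPfree : ∀ k, IsFreeTile n x (P k)) {k : Fin s} {i j : ℕ}
    (h : (i, j) ∈ P k) : IdxP n i j := by
  obtain ⟨p, hp, hT⟩ := (hPfree k).1
  rw [hT] at h
  exact sameTile_valid hp h

lemma sum_ite_mem (hPfree : ∀ k, IsFreeTile n x (P k)) (hPinj : Function.Injective P)
    (c : Fin s → ℝ) {p : ℕ × ℕ} {k : Fin s} (h : p ∈ P k) :
    ∑ k', (if p ∈ P k' then c k' else 0) = c k := by
  rw [Finset.sum_eq_single k]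
  · rw [if_pos h]
  · intro k' _ hne
    rw [if_neg]
    intro hmem
    exact hne (tile_mem_unique hPfree hPinj hmem h)
  · intro hk; exact absurd (Finset.mem_univ k) hk

lemma sum_ite_zero (c : Fin s → ℝ) {p : ℕ × ℕ} (h : ∀ k, p ∉ P k) :
    ∑ k', (if p ∈ P k' then c k' else 0) = 0 := by
  apply Finset.sum_eq_zero
  intro k _
  rw [if_neg (h k)]

lemma mulVec_row (hPfree : ∀ k, IsFreeTile n x (P k))
    (c : Fin s → ℝ) (j₀ : Fin (n - 2)) :
    ((tileMat n s P).mulVec c) j₀ =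
      ∑ i ∈ Finset.Icc 1 (j₀.1 + 2), ∑ k, (if (i, j₀.1 + 2) ∈ P k then c k else 0) := by
  rw [Finset.sum_comm]
  unfold Matrix.mulVec dotProduct
  apply Finset.sum_congr rfl
  intro k _
  have htm : tileMat n s P j₀ k = (({i : ℕ | (i, j₀.1 + 2) ∈ P k}.ncard : ℕ) : ℝ) := rfl
  have hset : {i : ℕ | (i, j₀.1 + 2) ∈ P k} =
      ↑((Finset.Icc 1 (j₀.1 + 2)).filter (fun i => (i, j₀.1 + 2) ∈ P k)) := by
    ext i
    simp only [Set.mem_setOf_eq, Finset.coe_filter, Finset.mem_Icc]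
    constructor
    · intro h
      have := mem_valid hPfree h
      exact ⟨⟨this.1, this.2.1⟩, h⟩
    · exact fun h => h.2
  show tileMat n s P j₀ k * c k = _
  rw [htm, hset, Set.ncard_coe_finset, ← Finset.sum_filter, Finset.sum_const, nsmul_eq_mul]

end Tiles

open Matrix in
lemma ker_iff_submatrix {m s : ℕ} (A : Matrix (Fin m) (Fin s) ℝ) :
    LinearMap.ker A.mulVecLin = ⊥ ↔
      ∃ rows : Fin s → Fin m, Function.Injective rows ∧
        ((A.submatrix rows id).det ≠ 0) := by
  constructor
  · intro hker
    have hinj : Function.Injective A.mulVecLin := by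
      rwa [← LinearMap.ker_eq_bot]
    have hrank : A.rank = s := by
      rw [Matrix.rank, LinearMap.finrank_range_of_inj hinj]
      simp
    have hspan : Submodule.span ℝ (Set.range A) = ⊤ := by
      apply Submodule.eq_top_of_finrank_eq
      rw [show Set.range A = Set.range A.row from rfl, ← Matrix.rank_eq_finrank_span_row, hrank]
      simp
    obtain ⟨b, hbsub, hbspan, hbli⟩ := exists_linearIndependent ℝ (Set.range A)
    rw [hspan] at hbspan
    have hfin : b.Finite := hbli.setFinite
    have : Fintype b := hfin.fintype
    let B : Module.Basis b ℝ (Fin s → ℝ) := Module.Basis.mk hbli (by rw [Subtype.range_coe, hbspan])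
    have hcard : Fintype.card b = s := by
      have := Module.finrank_eq_card_basis B
      simpa using this.symm
    let e : Fin s ≃ b := (Fintype.equivFinOfCardEq hcard).symm
    have hpick : ∀ v : b, ∃ j : Fin m, A j = (v : Fin s → ℝ) := fun v => hbsub v.2
    choose g hg using hpick
    refine ⟨g ∘ e, ?_, ?_⟩
    · intro j1 j2 h
      have h1 : ((e j1 : b) : Fin s → ℝ) = ((e j2 : b) : Fin s → ℝ) := by
        rw [← hg (e j1), ← hg (e j2)]; exact congrArg A h
      exact e.injective (Subtype.ext h1)
    · intro hdet
      have hli : LinearIndependent ℝ (fun j : Fin s => (A.submatrix (g ∘ e) id) j) := by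
        have heq : (fun j : Fin s => (A.submatrix (g ∘ e) id) j) =
            fun j => ((e j : b) : Fin s → ℝ) := by
          funext j; exact hg (e j)
        rw [heq]
        exact hbli.comp e e.injective
      have hdet' : (A.submatrix (g ∘ e) id)ᵀ.det = 0 := by
        rw [Matrix.det_transpose]; exact hdet
      obtain ⟨v, hv0, hv⟩ := Matrix.exists_mulVec_eq_zero_iff.mpr hdet'
      have hsum : ∑ j, v j • (A.submatrix (g ∘ e) id) j = 0 := by
        funext k
        have := congrFun hv k
        simpa [Matrix.mulVec, dotProduct, Matrix.transpose, mul_comm,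
          Finset.sum_apply] using this
      have := Fintype.linearIndependent_iff.mp hli v hsum
      exact hv0 (funext this)
  · rintro ⟨rows, hrinj, hdet⟩
    rw [LinearMap.ker_eq_bot']
    intro v hv
    have hsub : (A.submatrix rows id).mulVec v = 0 := by
      funext j
      have := congrFun hv (rows j)
      simpa [Matrix.mulVec, dotProduct] using this
    by_contra hv0
    exact hdet (Matrix.exists_mulVec_eq_zero_iff.mp ⟨v, hv0, hsub⟩)

/-- A GT-pattern `x ∈ GT(λ,μ)` is a vertex iff its tiling matrix has trivial kernel, iff some
`s × s` submatrix of the tiling matrix has nonzero determinant. -/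
theorem stmt5 (n s : ℕ) (lam mu : ℕ → ℤ) (x : ℕ → ℕ → ℝ)
    (hx : GTMem n lam mu x)
    (P : Fin s → Set (ℕ × ℕ))
    (hPfree : ∀ k, IsFreeTile n x (P k)) (hPinj : Function.Injective P)
    (hPall : ∀ T, IsFreeTile n x T → ∃ k, P k = T)
 :
    (x ∈ Set.extremePoints ℝ {y | GTMem n lam mu y} ↔
      LinearMap.ker (tileMat n s P).mulVecLin = ⊥) ∧
    (LinearMap.ker (tileMat n s P).mulVecLin = ⊥ ↔
      ∃ rows : Fin s → Fin (n - 2), Function.Injective rows ∧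
        ((tileMat n s P).submatrix rows id).det ≠ 0) := by
  classical
  obtain ⟨⟨hposx, hineqx⟩, houtx, htopx, hrowx⟩ := hx
  have hxmem : GTMem n lam mu x := ⟨⟨hposx, hineqx⟩, houtx, htopx, hrowx⟩
  refine ⟨⟨?_, ?_⟩, ker_iff_submatrix _⟩
  · -- extreme → ker = ⊥
    intro hext
    rw [mem_extremePoints] at hext
    rw [LinearMap.ker_eq_bot']
    intro t ht
    have hmv0 : (tileMat n s P).mulVec t = 0 := by rwa [Matrix.mulVecLin_apply] at ht
    set d : ℕ → ℕ → ℝ := fun i j => ∑ k, (if (i, j) ∈ P k then t k else 0) with hd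
    have dmem : ∀ (k : Fin s) i j, (i, j) ∈ P k → d i j = t k := fun k i j h =>
      sum_ite_mem hPfree hPinj t h
    have dzero : ∀ i j, (∀ k, (i, j) ∉ P k) → d i j = 0 := fun i j h =>
      sum_ite_zero t h
    have dconst : ∀ p q : ℕ × ℕ, SameTile n x p q → d p.1 p.2 = d q.1 q.2 := by
      intro p q h
      by_cases hk : ∃ k, p ∈ P k
      · obtain ⟨k, hk⟩ := hk
        have hq : q ∈ P k := tile_closed (hPfree k).1 hk h
        rw [show d p.1 p.2 = t k from dmem k p.1 p.2 hk,
          show d q.1 q.2 = t k from dmem k q.1 q.2 hq]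
      · push_neg at hk
        have hq : ∀ k, q ∉ P k := fun k hqk =>
          hk k (tile_closed (hPfree k).1 hqk (sameTile_symm h))
        rw [show d p.1 p.2 = 0 from dzero p.1 p.2 hk,
          show d q.1 q.2 = 0 from dzero q.1 q.2 hq]
    have drow : ∀ j, 1 ≤ j → j ≤ n → ∑ i ∈ Finset.Icc 1 j, d i j = 0 := by
      intro j h1 h2
      rcases eq_or_ne j n with rfl | hjn
      · exact Finset.sum_eq_zero fun i _ => dzero i j (fun k => (hPfree k).2.2 i)
      rcases eq_or_ne j 1 with rfl | hj1
      · rw [Finset.Icc_self, Finset.sum_singleton]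
        exact dzero 1 1 (fun k => (hPfree k).2.1)
      · have hlt : j - 2 < n - 2 := by omega
        have hj2 : j - 2 + 2 = j := by omega
        have h0 := mulVec_row hPfree t ⟨j - 2, hlt⟩
        dsimp only at h0
        rw [hj2] at h0
        rw [show ((tileMat n s P).mulVec t) ⟨j - 2, hlt⟩ = 0 from by rw [hmv0]; rfl] at h0
        simp only [hd]
        exact h0.symm
    set E : ℝ := ∑ k, |t k| with hE
    have hE0 : 0 ≤ E := Finset.sum_nonneg fun _ _ => abs_nonneg _
    have hdbd : ∀ i j, |d i j| ≤ E := by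
      intro i j
      refine (Finset.abs_sum_le_sum_abs _ _).trans ?_
      refine Finset.sum_le_sum fun k _ => ?_
      split
      · exact le_rfl
      · simp [abs_nonneg]
    set Q : Finset (ℕ × ℕ) := Finset.Icc 1 n ×ˢ Finset.Icc 1 n with hQdef
    set S : Finset ℝ := ((Q.image fun p => x p.1 p.2) ∪
        (Q.image fun p => x p.1 (p.2 + 1) - x p.1 p.2)) ∪
        (Q.image fun p => x p.1 p.2 - x (p.1 + 1) (p.2 + 1)) with hSdef
    have hQm : ∀ i j : ℕ, 1 ≤ i → i ≤ j → j ≤ n → (i, j) ∈ Q := by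
      intro i j h1 h2 h3
      simp only [hQdef, Finset.mem_product, Finset.mem_Icc]
      omega
    have hS1 : ∀ i j, IdxP n i j → x i j ∈ S := by
      intro i j h
      simp only [hSdef, Finset.mem_union]
      exact Or.inl (Or.inl (Finset.mem_image.mpr ⟨(i, j), hQm i j h.1 h.2.1 h.2.2, rfl⟩))
    have hS2 : ∀ i j : ℕ, 1 ≤ i → i ≤ j → j + 1 ≤ n → x i (j + 1) - x i j ∈ S := by
      intro i j h1 h2 h3
      simp only [hSdef, Finset.mem_union]
      exact Or.inl (Or.inr (Finset.mem_image.mpr ⟨(i, j), hQm i j h1 h2 (by omega), rfl⟩))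
    have hS3 : ∀ i j : ℕ, 1 ≤ i → i ≤ j → j + 1 ≤ n → x i j - x (i + 1) (j + 1) ∈ S := by
      intro i j h1 h2 h3
      simp only [hSdef, Finset.mem_union]
      exact Or.inr (Finset.mem_image.mpr ⟨(i, j), hQm i j h1 h2 (by omega), rfl⟩)
    set Spos := S.filter (fun c => 0 < c) with hSposdef
    set δ : ℝ := if h : Spos.Nonempty then Spos.min' h else 1 with hδdef
    have hδ0 : 0 < δ := by
      rw [hδdef]
      split
      · next h => exact (Finset.mem_filter.mp (Spos.min'_mem h)).2
      · norm_num
    have hδle : ∀ c ∈ S, 0 < c → δ ≤ c := by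
      intro c hc h0
      have hmem : c ∈ Spos := Finset.mem_filter.mpr ⟨hc, h0⟩
      rw [hδdef, dif_pos ⟨c, hmem⟩]
      exact Spos.min'_le c hmem
    set ε : ℝ := δ / (2 * (E + 1)) with hεdef
    have hε0 : 0 < ε := by rw [hεdef]; positivity
    have hkey : ∀ c ∈ S, 0 < c → ∀ η e : ℝ, |η| ≤ ε → |e| ≤ 2 * E → 0 ≤ c + η * e := by
      intro c hc h0 η e hη he
      have h1 : |η * e| ≤ ε * (2 * E) := by
        rw [abs_mul]
        exact mul_le_mul hη he (abs_nonneg _) hε0.le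
      have h2 : ε * (2 * E) < δ := by
        rw [hεdef, div_mul_eq_mul_div, div_lt_iff₀ (by linarith)]
        nlinarith
      have h3 := hδle c hc h0
      linarith [neg_abs_le (η * e)]
    have habs2 : ∀ u v : ℝ, |u| ≤ E → |v| ≤ E → |u - v| ≤ 2 * E := by
      intro u v hu hv
      have h := abs_sub u v
      linarith [abs_sub u v]
    have hpert : ∀ η : ℝ, |η| ≤ ε → GTMem n lam mu (fun i j => x i j + η * d i j) := by
      intro η hη
      refine ⟨⟨?_, ?_⟩, ?_, ?_, ?_⟩
      · intro i j hij
        show 0 ≤ x i j + η * d i j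
        by_cases hk : ∃ k, (i, j) ∈ P k
        · obtain ⟨k, hk⟩ := hk
          have hx0 : 0 < x i j := free_tile_pos ⟨hposx, hineqx⟩ (hPfree k) hk
          exact hkey (x i j) (hS1 i j hij) hx0 η (d i j) hη
            (by have := hdbd i j; linarith)
        · push_neg at hk
          rw [dzero i j hk, mul_zero, add_zero]
          exact hposx i j hij
      · intro i j h1 h2 h3
        constructor
        · show x i (j + 1) + η * d i (j + 1) ≥ x i j + η * d i j
          have hle := (hineqx i j h1 h2 h3).1
          have hc : 0 ≤ x i (j + 1) - x i j := by linarith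
          rcases hc.lt_or_eq with hlt | heq0
          · have hk := hkey _ (hS2 i j h1 h2 h3) hlt η (d i (j + 1) - d i j) hη
              (habs2 _ _ (hdbd i (j + 1)) (hdbd i j))
            have hexp : (x i (j + 1) - x i j) + η * (d i (j + 1) - d i j) =
                (x i (j + 1) + η * d i (j + 1)) - (x i j + η * d i j) := by ring
            linarith [hk, hexp.symm ▸ hk]
          · have hst : Step n x (i, j) (i, j + 1) :=
              ⟨⟨h1, h2, by omega⟩, ⟨h1, by omega, h3⟩, Or.inr (Or.inl ⟨rfl, rfl⟩), by linarith⟩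
            have hdc : d i j = d i (j + 1) :=
              dconst (i, j) (i, j + 1) (Relation.ReflTransGen.single hst)
            have hxe : x i (j + 1) = x i j := by linarith
            rw [hxe, ← hdc]
        · show x i j + η * d i j ≥ x (i + 1) (j + 1) + η * d (i + 1) (j + 1)
          have hle := (hineqx i j h1 h2 h3).2
          have hc : 0 ≤ x i j - x (i + 1) (j + 1) := by linarith
          rcases hc.lt_or_eq with hlt | heq0
          · have hk := hkey _ (hS3 i j h1 h2 h3) hlt η (d i j - d (i + 1) (j + 1)) hη
              (habs2 _ _ (hdbd i j) (hdbd (i + 1) (j + 1)))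
            have hexp : (x i j - x (i + 1) (j + 1)) + η * (d i j - d (i + 1) (j + 1)) =
                (x i j + η * d i j) - (x (i + 1) (j + 1) + η * d (i + 1) (j + 1)) := by ring
            linarith [hk, hexp.symm ▸ hk]
          · have hst : Step n x (i, j) (i + 1, j + 1) :=
              ⟨⟨h1, h2, by omega⟩, ⟨by omega, by omega, h3⟩, Or.inl ⟨rfl, rfl⟩, by linarith⟩
            have hdc : d i j = d (i + 1) (j + 1) :=
              dconst (i, j) (i + 1, j + 1) (Relation.ReflTransGen.single hst)
            have hxe : x i j = x (i + 1) (j + 1) := by linarith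
            rw [hxe, ← hdc]
      · intro i j h
        show x i j + η * d i j = 0
        rw [houtx i j h, dzero i j (fun k hk => h (mem_valid hPfree hk)), mul_zero, add_zero]
      · intro i h1 h2
        show x i n + η * d i n = (lam i : ℝ)
        rw [dzero i n (fun k => (hPfree k).2.2 i), mul_zero, add_zero]
        exact htopx i h1 h2
      · intro j h1 h2
        show ∑ i ∈ Finset.Icc 1 j, (x i j + η * d i j) = _
        rw [Finset.sum_add_distrib, ← Finset.mul_sum, drow j h1 h2, mul_zero, add_zero]
        exact hrowx j h1 h2
    have hy := hpert ε (by rw [abs_of_pos hε0])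
    have hz := hpert (-ε) (by rw [abs_neg, abs_of_pos hε0])
    have hseg : x ∈ openSegment ℝ (fun i j => x i j + ε * d i j)
        (fun i j => x i j + (-ε) * d i j) := by
      refine ⟨1 / 2, 1 / 2, by norm_num, by norm_num, by norm_num, ?_⟩
      funext i j
      show (1 / 2 : ℝ) * (x i j + ε * d i j) + (1 / 2 : ℝ) * (x i j + (-ε) * d i j) = x i j
      ring
    have hres := hext.2 _ hy _ hz hseg
    have hdz : ∀ i j, d i j = 0 := by
      intro i j
      have h' : x i j + ε * d i j = x i j := congrFun (congrFun hres.1 i) j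
      have h'' : ε * d i j = 0 := by linarith
      rcases mul_eq_zero.mp h'' with h | h
      · exact absurd h (ne_of_gt hε0)
      · exact h
    funext k
    obtain ⟨p, hp, hPk⟩ := (hPfree k).1
    have hpk : p ∈ P k := by rw [hPk]; exact Relation.ReflTransGen.refl
    have hh : d p.1 p.2 = t k := dmem k p.1 p.2 hpk
    rw [hdz p.1 p.2] at hh
    exact hh.symm
  · -- ker = ⊥ → extreme
    intro hker
    rw [mem_extremePoints]
    refine ⟨hxmem, ?_⟩
    intro y hy z hz hseg
    obtain ⟨a, b, ha, hb, hab, hsum⟩ := hseg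
    have hy' : GTMem n lam mu y := hy
    have hz' : GTMem n lam mu z := hz
    have hx_eq : ∀ i j, a * y i j + b * z i j = x i j := by
      intro i j
      exact congrFun (congrFun hsum i) j
    have key : ∀ u1 u2 v1 v2 : ℝ, a * u1 + b * v1 = a * u2 + b * v2 →
        u2 ≤ u1 → v2 ≤ v1 → u1 = u2 ∧ v1 = v2 := by
      intro u1 u2 v1 v2 he hu hv
      have hu2 : u1 ≤ u2 := by nlinarith [mul_nonneg hb.le (sub_nonneg.mpr hv)]
      have hv2 : v1 ≤ v2 := by nlinarith [mul_nonneg ha.le (sub_nonneg.mpr hu)]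
      exact ⟨le_antisymm hu2 hu, le_antisymm hv2 hv⟩
    have stepEq : ∀ p q : ℕ × ℕ, Step n x p q →
        y p.1 p.2 = y q.1 q.2 ∧ z p.1 p.2 = z q.1 q.2 := by
      rintro ⟨i, j⟩ ⟨i', j'⟩ ⟨hp, hq, hadj, hval⟩
      dsimp only at hp hq hval ⊢
      rcases hadj with ⟨h1, h2⟩ | ⟨h1, h2⟩ | ⟨h1, h2⟩ | ⟨h1, h2⟩ <;> dsimp only at h1 h2
      · subst h1; subst h2
        have hn : j + 1 ≤ n := hq.2.2
        have hyi := (hy'.1.2 i j hp.1 hp.2.1 hn).2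
        have hzi := (hz'.1.2 i j hp.1 hp.2.1 hn).2
        have he : a * y i j + b * z i j = a * y (i + 1) (j + 1) + b * z (i + 1) (j + 1) := by
          rw [hx_eq, hx_eq]; exact hval
        exact key _ _ _ _ he hyi hzi
      · subst h2
        rw [h1] at hq hval ⊢
        have hn : j + 1 ≤ n := hq.2.2
        have hyi := (hy'.1.2 i j hp.1 hp.2.1 hn).1
        have hzi := (hz'.1.2 i j hp.1 hp.2.1 hn).1
        have he : a * y i (j + 1) + b * z i (j + 1) = a * y i j + b * z i j := by
          rw [hx_eq, hx_eq]; exact hval.symm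
        obtain ⟨h4, h5⟩ := key _ _ _ _ he hyi hzi
        exact ⟨h4.symm, h5.symm⟩
      · subst h1; subst h2
        have hn : j' + 1 ≤ n := hp.2.2
        have hyi := (hy'.1.2 i' j' hq.1 hq.2.1 hn).2
        have hzi := (hz'.1.2 i' j' hq.1 hq.2.1 hn).2
        have he : a * y i' j' + b * z i' j' = a * y (i' + 1) (j' + 1) + b * z (i' + 1) (j' + 1) := by
          rw [hx_eq, hx_eq]; exact hval.symm
        obtain ⟨h4, h5⟩ := key _ _ _ _ he hyi hzi
        exact ⟨h4.symm, h5.symm⟩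
      · subst h2
        rw [← h1] at hq hval ⊢
        have hn : j' + 1 ≤ n := hp.2.2
        have hyi := (hy'.1.2 i j' hq.1 hq.2.1 hn).1
        have hzi := (hz'.1.2 i j' hq.1 hq.2.1 hn).1
        have he : a * y i (j' + 1) + b * z i (j' + 1) = a * y i j' + b * z i j' := by
          rw [hx_eq, hx_eq]; exact hval
        exact key _ _ _ _ he hyi hzi
    have wconst : ∀ p q : ℕ × ℕ, SameTile n x p q →
        y p.1 p.2 - z p.1 p.2 = y q.1 q.2 - z q.1 q.2 := by
      intro p q h
      induction h with
      | refl => rfl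
      | tail h1 h2 ih =>
        obtain ⟨hy2, hz2⟩ := stepEq _ _ h2
        rw [ih, hy2, hz2]
    have hTile : ∀ k : Fin s, ∃ p : ℕ × ℕ, p ∈ P k ∧ ∀ q, q ∈ P k ↔ SameTile n x p q := by
      intro k
      obtain ⟨p, hp, hPk⟩ := (hPfree k).1
      exact ⟨p, by rw [hPk]; exact Relation.ReflTransGen.refl, fun q => by rw [hPk]; rfl⟩
    choose pt hpt1 hpt2 using hTile
    set t : Fin s → ℝ := fun k => y (pt k).1 (pt k).2 - z (pt k).1 (pt k).2 with htdef
    have W : ∀ i j, IdxP n i j →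
        y i j - z i j = ∑ k, (if (i, j) ∈ P k then t k else 0) := by
      intro i j hij
      by_cases hk : ∃ k, (i, j) ∈ P k
      · obtain ⟨k, hk⟩ := hk
        rw [sum_ite_mem hPfree hPinj t hk]
        have hsame : SameTile n x (pt k) (i, j) := (hpt2 k (i, j)).mp hk
        have hw : y (pt k).1 (pt k).2 - z (pt k).1 (pt k).2 = y i j - z i j :=
          wconst _ _ hsame
        exact hw.symm
      · push_neg at hk
        rw [sum_ite_zero t hk]
        have hT : IsTile n x {q | SameTile n x (i, j) q} := ⟨(i, j), hij, rfl⟩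
        have hnotfree : ¬ IsFreeTile n x {q | SameTile n x (i, j) q} := by
          intro hfree
          obtain ⟨k, hk'⟩ := hPall _ hfree
          exact hk k (by rw [hk']; exact Relation.ReflTransGen.refl)
        have hcase : ((1, 1) : ℕ × ℕ) ∈ {q | SameTile n x (i, j) q} ∨
            ∃ i', ((i', n) : ℕ × ℕ) ∈ {q | SameTile n x (i, j) q} := by
          by_contra hc
          push_neg at hc
          exact hnotfree ⟨hT, hc.1, hc.2⟩
        rcases hcase with h11 | ⟨i', hi'⟩
        · have hw : y i j - z i j = y 1 1 - z 1 1 := wconst (i, j) (1, 1) h11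
          have hn1 : 1 ≤ n := by omega
          have hy1 := hy'.2.2.2 1 le_rfl hn1
          have hz1 := hz'.2.2.2 1 le_rfl hn1
          rw [Finset.Icc_self, Finset.sum_singleton, Finset.sum_singleton] at hy1 hz1
          rw [hw, hy1, hz1, sub_self]
        · have hvalid : IdxP n i' n := sameTile_valid hij hi'
          have hw : y i j - z i j = y i' n - z i' n := wconst (i, j) (i', n) hi'
          rw [hw, hy'.2.2.1 i' hvalid.1 (hvalid.2.1.trans hvalid.2.2),
            hz'.2.2.1 i' hvalid.1 (hvalid.2.1.trans hvalid.2.2), sub_self]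
    have hmv : (tileMat n s P).mulVec t = 0 := by
      funext j₀
      rw [mulVec_row hPfree t j₀]
      have hjn : j₀.1 + 2 ≤ n := by have := j₀.2; omega
      have hstep : ∀ i ∈ Finset.Icc 1 (j₀.1 + 2),
          (∑ k, if (i, j₀.1 + 2) ∈ P k then t k else 0) = y i (j₀.1 + 2) - z i (j₀.1 + 2) := by
        intro i hi
        rw [Finset.mem_Icc] at hi
        exact (W i _ ⟨hi.1, hi.2, hjn⟩).symm
      rw [Finset.sum_congr rfl hstep, Finset.sum_sub_distrib,
        hy'.2.2.2 (j₀.1 + 2) (by omega) hjn, hz'.2.2.2 (j₀.1 + 2) (by omega) hjn]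
      simp
    have ht0 : t = 0 := by
      have hmem : t ∈ LinearMap.ker (tileMat n s P).mulVecLin := by
        rw [LinearMap.mem_ker, Matrix.mulVecLin_apply]; exact hmv
      rw [hker] at hmem
      simpa using hmem
    have hyz : y = z := by
      funext i j
      by_cases hij : IdxP n i j
      · have hW := W i j hij
        rw [ht0] at hW
        simp only [Pi.zero_apply, ite_self, Finset.sum_const_zero] at hW
        linarith
      · rw [hy'.2.1 i j hij, hz'.2.1 i j hij]
    have hyx : y = x := by
      funext i j
      have h1 := hx_eq i j
      rw [← hyz] at h1
      calc y i j = (a + b) * y i j := by rw [hab, one_mul]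
      _ = a * y i j + b * y i j := by ring
      _ = x i j := h1
    exact ⟨hyx, by rw [← hyz]; exact hyx⟩
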